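/- The stability-based histogram algorithm is (ε, δ)-differentially private: for any two neighbouring datasets D, D' ∈ X^n differing in one row, and any set S of possible output histograms, P(SBH(D) ∈ S) ≤ e^ε · P(SBH(D') ∈ S) + δ. -/

import Mathlib

open MeasureTheory

/-- The Laplace distribution with mean 0 and scale `b`. -/
noncomputable def laplace (b : ℝ) : Measure ℝ :=
  volume.withDensity (fun x => ENNReal.ofReal (1 / (2 * b) * Real.exp (-|x| / b)))

/-- The number of rows of `D` equal to the point `x` (the point function `q_x(D)`). -/
def pointCount {X : Type*} [DecidableEq X] {n : ℕ} (D : Fin n → X) (x : X) : ℕ :=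
  (Finset.univ.filter (fun j => D j = x)).card

/-- The distribution of the output of the stability-based histogram algorithm:
for each point `x` of the domain, if `q_x(D) = 0` the answer is `0`; otherwise the answer
is `q_x(D) + Lap(2/ε)`, zeroed out if below the threshold `2·ln(2/δ)/ε + 1` and rounded
otherwise. Noise is independent across points. -/
noncomputable def SBH {X : Type*} [Fintype X] [DecidableEq X] {n : ℕ}
    (ε δ : ℝ) (D : Fin n → X) : Measure (X → ℝ) :=
  Measure.pi (fun x =>
    if pointCount D x = 0 then Measure.dirac 0
    else (laplace (2 / ε)).map (fun z =>
      if (pointCount D x : ℝ) + z < 2 * Real.log (2 / δ) / ε + 1 then 0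
      else (round ((pointCount D x : ℝ) + z) : ℝ)))

/-- Two `n`-row datasets are neighbours: they differ in exactly one row. -/
def Neighbor {X : Type*} {n : ℕ} (D D' : Fin n → X) : Prop :=
  ∃ i, D i ≠ D' i ∧ ∀ j, j ≠ i → D j = D' j

open Real Set ENNReal

lemma lapdens_meas (b : ℝ) :
    Measurable (fun x : ℝ => ENNReal.ofReal (1 / (2 * b) * Real.exp (-|x| / b))) := by
  fun_prop

lemma laplace_apply {b : ℝ} {A : Set ℝ} (hA : MeasurableSet A) :
    laplace b A = ∫⁻ x in A, ENNReal.ofReal (1 / (2 * b) * Real.exp (-|x| / b)) :=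
  withDensity_apply _ hA

lemma integral_exp_neg_div_Ioi {b : ℝ} (hb : 0 < b) (t : ℝ) :
    ∫ x in Ioi t, Real.exp (-x / b) = b * Real.exp (-t / b) := by
  have h := MeasureTheory.integral_comp_mul_left_Ioi (fun y => Real.exp (-y)) t
    (b := 1 / b) (by positivity)
  simp only [smul_eq_mul] at h
  have e1 : (fun x : ℝ => Real.exp (-(1 / b * x))) = fun x : ℝ => Real.exp (-x / b) := by
    ext x; ring_nf
  rw [e1] at h
  rw [h, integral_exp_neg_Ioi]
  field_simp

lemma integrableOn_lapdens_Ioi {b : ℝ} (hb : 0 < b) (t : ℝ) :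
    IntegrableOn (fun x : ℝ => 1 / (2 * b) * Real.exp (-x / b)) (Ioi t) := by
  have h := (exp_neg_integrableOn_Ioi t (show (0:ℝ) < 1 / b by positivity)).const_mul (1 / (2 * b))
  have e1 : (fun x : ℝ => 1 / (2 * b) * Real.exp (-(1 / b) * x))
      = fun x : ℝ => 1 / (2 * b) * Real.exp (-x / b) := by
    ext x; ring_nf
  rwa [e1] at h

lemma laplace_Ici {b : ℝ} (hb : 0 < b) {t : ℝ} (ht : 0 ≤ t) :
    laplace b (Ici t) = ENNReal.ofReal (Real.exp (-t / b) / 2) := by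
  rw [laplace_apply measurableSet_Ici]
  rw [setLIntegral_congr (Ioi_ae_eq_Ici (a := t)).symm]
  have h1 : ∫⁻ x in Ioi t, ENNReal.ofReal (1 / (2 * b) * Real.exp (-|x| / b))
      = ∫⁻ x in Ioi t, ENNReal.ofReal (1 / (2 * b) * Real.exp (-x / b)) := by
    apply setLIntegral_congr_fun measurableSet_Ioi
    refine (fun x hx => ?_)
    simp only [abs_of_nonneg (le_trans ht (le_of_lt hx))]
  rw [h1, ← ofReal_integral_eq_lintegral_ofReal (integrableOn_lapdens_Ioi hb t)
    (MeasureTheory.ae_of_all _ (fun x => by positivity))]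
  rw [MeasureTheory.integral_const_mul, integral_exp_neg_div_Ioi hb]
  congr 1
  field_simp

lemma laplace_univ {b : ℝ} (hb : 0 < b) : laplace b univ = 1 := by
  set f : ℝ → ℝ≥0∞ := fun x => ENNReal.ofReal (1 / (2 * b) * Real.exp (-|x| / b)) with hf
  have hIio : laplace b (Iio 0) = laplace b (Ioi 0) := by
    rw [laplace_apply measurableSet_Iio, laplace_apply measurableSet_Ioi,
      ← lintegral_indicator measurableSet_Iio _, ← lintegral_indicator measurableSet_Ioi _]
    have key : ∀ x : ℝ, Set.indicator (Iio 0) f x = Set.indicator (Ioi 0) f (-x) := by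
      intro x
      simp only [Set.indicator, mem_Iio, mem_Ioi, hf, abs_neg]
      by_cases h : x < 0
      · rw [if_pos h, if_pos (by linarith)]
      · rw [if_neg h, if_neg (by intro hc; exact h (by linarith))]
    simp_rw [← hf, key]
    have hmeas : Measurable (Set.indicator (Ioi 0) f) :=
      (lapdens_meas b).indicator measurableSet_Ioi
    calc ∫⁻ x, Set.indicator (Ioi 0) f (-x) ∂volume
        = ∫⁻ x, Set.indicator (Ioi 0) f x ∂(Measure.map Neg.neg volume) := by
          rw [lintegral_map hmeas measurable_neg]
      _ = ∫⁻ x, Set.indicator (Ioi 0) f x ∂volume := by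
          rw [Measure.map_neg_eq_self (volume : Measure ℝ)]
  have hIoi : laplace b (Ioi 0) = laplace b (Ici 0) := by
    rw [laplace_apply measurableSet_Ioi, laplace_apply measurableSet_Ici,
      setLIntegral_congr (Ioi_ae_eq_Ici (a := (0:ℝ)))]
  have huniv : (univ : Set ℝ) = Iio 0 ∪ Ici 0 := (Iio_union_Ici).symm
  rw [huniv, measure_union (Iio_disjoint_Ici le_rfl) measurableSet_Ici, hIio, hIoi,
    laplace_Ici hb le_rfl]
  rw [neg_zero, zero_div, Real.exp_zero]
  rw [← ENNReal.ofReal_add (by norm_num) (by norm_num)]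
  norm_num

theorem laplace_prob {b : ℝ} (hb : 0 < b) : IsProbabilityMeasure (laplace b) :=
  ⟨laplace_univ hb⟩

lemma laplace_shift_le {b : ℝ} (hb : 0 < b) (t : ℝ) {B : Set ℝ} (hB : MeasurableSet B) :
    laplace b ((fun z => z + t) ⁻¹' B) ≤ ENNReal.ofReal (Real.exp (|t| / b)) * laplace b B := by
  set f : ℝ → ℝ≥0∞ := fun x => ENNReal.ofReal (1 / (2 * b) * Real.exp (-|x| / b)) with hf
  have hBm : MeasurableSet ((fun z => z + t) ⁻¹' B) := (measurable_add_const t) hB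
  rw [laplace_apply hBm, laplace_apply hB,
    ← lintegral_indicator hBm _, ← lintegral_indicator hB _]
  have key : ∀ x : ℝ, Set.indicator ((fun z => z + t) ⁻¹' B) f x
      = Set.indicator B (fun y => f (y - t)) (x + t) := by
    intro x
    simp only [Set.indicator, Set.mem_preimage]
    by_cases h : x + t ∈ B
    · simp [Set.indicator, Set.mem_preimage, h]
    · simp [Set.indicator, Set.mem_preimage, h]
  simp_rw [← hf, key]
  rw [lintegral_add_right_eq_self (Set.indicator B (fun y => f (y - t))) t]
  have hpt : ∀ x : ℝ, Set.indicator B (fun y => f (y - t)) x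
      ≤ ENNReal.ofReal (Real.exp (|t| / b)) * Set.indicator B f x := by
    intro x
    simp only [Set.indicator]
    by_cases h : x ∈ B
    · rw [if_pos h, if_pos h, hf]
      rw [← ENNReal.ofReal_mul (by positivity)]
      apply ENNReal.ofReal_le_ofReal
      rw [show Real.exp (|t| / b) * (1 / (2 * b) * Real.exp (-|x| / b))
          = 1 / (2 * b) * Real.exp (|t| / b + -|x| / b) by rw [Real.exp_add]; ring]
      have habs : -|x - t| ≤ |t| + -|x| := by
        have h3 := abs_sub_abs_le_abs_sub x (x - t)
        simp only [_root_.sub_sub_cancel] at h3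
        linarith
      have h2 : -|x - t| / b ≤ |t| / b + -|x| / b := by
        rw [← add_div]
        gcongr
      have := Real.exp_le_exp.mpr h2
      gcongr
    · rw [if_neg h, if_neg h, mul_zero]
  calc ∫⁻ x, Set.indicator B (fun y => f (y - t)) x ∂volume
      ≤ ∫⁻ x, ENNReal.ofReal (Real.exp (|t| / b)) * Set.indicator B f x ∂volume :=
        lintegral_mono hpt
    _ = ENNReal.ofReal (Real.exp (|t| / b)) * ∫⁻ x, Set.indicator B f x ∂volume :=
        lintegral_const_mul _ ((lapdens_meas b).indicator hB)

noncomputable def Mech (ε δ : ℝ) (k : ℕ) : Measure ℝ :=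
  if k = 0 then Measure.dirac 0
  else (laplace (2 / ε)).map (fun z =>
    if (k : ℝ) + z < 2 * Real.log (2 / δ) / ε + 1 then 0
    else (round ((k : ℝ) + z) : ℝ))

lemma g_meas (ε δ : ℝ) (k : ℕ) : Measurable (fun z : ℝ =>
    if (k : ℝ) + z < 2 * Real.log (2 / δ) / ε + 1 then 0
    else (round ((k : ℝ) + z) : ℝ)) := by
  have h1 : Monotone (fun x : ℝ => (round x : ℝ)) := by
    intro a b hab
    simp only [round_eq]
    exact_mod_cast Int.floor_mono (by linarith)
  refine Measurable.ite ?_ measurable_const ?_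
  · exact measurableSet_lt (by fun_prop) measurable_const
  · exact (h1.measurable).comp (by fun_prop)

theorem mech_prob (ε δ : ℝ) (hε : 0 < ε) (k : ℕ) : IsProbabilityMeasure (Mech ε δ k) := by
  unfold Mech
  split
  · infer_instance
  · have : IsProbabilityMeasure (laplace (2 / ε)) := laplace_prob (by positivity)
    exact Measure.isProbabilityMeasure_map (g_meas ε δ k).aemeasurable

def Bnd (m m' : Measure ℝ) (c d : ℝ≥0∞) : Prop :=
  ∀ A : Set ℝ, MeasurableSet A → m A ≤ c * m' A + d

lemma tail_le {ε δ : ℝ} (hε : 0 < ε) (hδ0 : 0 < δ) (hδ1 : δ < 1) :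
    laplace (2 / ε) {z : ℝ | ¬((1 : ℝ) + z < 2 * Real.log (2 / δ) / ε + 1)}
      ≤ ENNReal.ofReal (δ / 2) := by
  have hb : (0:ℝ) < 2 / ε := by positivity
  have hlog : 0 < Real.log (2 / δ) := Real.log_pos (by rw [lt_div_iff₀ hδ0]; linarith)
  have hset : {z : ℝ | ¬((1 : ℝ) + z < 2 * Real.log (2 / δ) / ε + 1)}
      = Ici (2 * Real.log (2 / δ) / ε) := by
    ext z
    simp only [mem_setOf_eq, not_lt, mem_Ici]
    constructor <;> intro h <;> linarith
  rw [hset, laplace_Ici hb (by positivity)]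
  apply ENNReal.ofReal_le_ofReal
  have he : -(2 * Real.log (2 / δ) / ε) / (2 / ε) = -Real.log (2 / δ) := by
    field_simp
  rw [he, Real.exp_neg, Real.exp_log (by positivity), inv_div]
  linarith

lemma mech_shift {ε δ : ℝ} (hε : 0 < ε) {k k' : ℕ} (hk : k ≠ 0) (hk' : k' ≠ 0)
    (hkk : k = k' + 1 ∨ k' = k + 1) :
    Bnd (Mech ε δ k) (Mech ε δ k') (ENNReal.ofReal (Real.exp (ε / 2))) 0 := by
  intro A hA
  have hb : (0:ℝ) < 2 / ε := by positivity
  set T : ℝ := 2 * Real.log (2 / δ) / ε + 1 with hT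
  simp only [Mech, if_neg hk, if_neg hk']
  rw [Measure.map_apply (g_meas ε δ k) hA, Measure.map_apply (g_meas ε δ k') hA]
  set c : ℝ := (k : ℝ) - (k' : ℝ) with hc
  have hg : (fun z : ℝ => if (k : ℝ) + z < T then 0 else (round ((k:ℝ)+z):ℝ)) ⁻¹' A
      = (fun z => z + c) ⁻¹'
        ((fun z : ℝ => if (k' : ℝ) + z < T then 0 else (round ((k':ℝ)+z):ℝ)) ⁻¹' A) := by
    ext z
    simp only [mem_preimage]
    have harg : (k' : ℝ) + (z + c) = (k:ℝ) + z := by rw [hc]; ring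
    rw [harg]
  rw [hg, add_zero]
  have h1 := laplace_shift_le hb c ((g_meas ε δ k') hA)
  have habs : |c| = 1 := by
    rcases hkk with h | h <;> subst h <;> rw [hc] <;> push_cast <;> simp
  rw [habs] at h1
  have hdiv : (1:ℝ) / (2 / ε) = ε / 2 := by field_simp
  rwa [hdiv] at h1

lemma mech_one_zero {ε δ : ℝ} (hε : 0 < ε) (hδ0 : 0 < δ) (hδ1 : δ < 1) :
    Bnd (Mech ε δ 1) (Mech ε δ 0) 1 (ENNReal.ofReal (δ / 2)) := by
  intro A hA
  have hb : (0:ℝ) < 2 / ε := by positivity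
  have hlprob : IsProbabilityMeasure (laplace (2 / ε)) := laplace_prob hb
  set T : ℝ := 2 * Real.log (2 / δ) / ε + 1 with hT
  simp only [Mech, if_neg one_ne_zero, if_pos rfl]
  rw [Measure.map_apply (g_meas ε δ 1) hA, one_mul]
  set g : ℝ → ℝ := fun z => if ((1:ℕ) : ℝ) + z < T then 0 else (round (((1:ℕ):ℝ)+z):ℝ) with hgdef
  set S₂ : Set ℝ := {z : ℝ | ¬((1 : ℝ) + z < T)} with hS₂
  have hsplit : g ⁻¹' A ⊆ (g ⁻¹' A ∩ S₂ᶜ) ∪ S₂ := by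
    intro z hz
    by_cases h : z ∈ S₂
    · exact Or.inr h
    · exact Or.inl ⟨hz, h⟩
  calc laplace (2/ε) (g ⁻¹' A)
      ≤ laplace (2/ε) ((g ⁻¹' A ∩ S₂ᶜ) ∪ S₂) := measure_mono hsplit
    _ ≤ laplace (2/ε) (g ⁻¹' A ∩ S₂ᶜ) + laplace (2/ε) S₂ := measure_union_le _ _
    _ ≤ Measure.dirac 0 A + ENNReal.ofReal (δ / 2) := by
        apply add_le_add
        · by_cases h0 : (0:ℝ) ∈ A
          · rw [Measure.dirac_apply' 0 hA, Set.indicator_of_mem h0]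
            exact prob_le_one
          · have hempty : g ⁻¹' A ∩ S₂ᶜ = ∅ := by
              ext z
              simp only [mem_inter_iff, mem_preimage, mem_compl_iff, hS₂, mem_setOf_eq,
                not_not, mem_empty_iff_false, iff_false, not_and]
              intro hzA hzlt
              have : g z = 0 := by
                rw [hgdef]
                simp only [Nat.cast_one]
                exact if_pos hzlt
              rw [this] at hzA
              exact h0 hzA
            rw [hempty]
            simp
        · exact tail_le hε hδ0 hδ1

lemma mech_zero_one {ε δ : ℝ} (hε : 0 < ε) (hδ0 : 0 < δ) (hδ1 : δ < 1) :
    Bnd (Mech ε δ 0) (Mech ε δ 1) 1 (ENNReal.ofReal (δ / 2)) := by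
  intro A hA
  have hb : (0:ℝ) < 2 / ε := by positivity
  have hlprob : IsProbabilityMeasure (laplace (2 / ε)) := laplace_prob hb
  set T : ℝ := 2 * Real.log (2 / δ) / ε + 1 with hT
  simp only [Mech, if_pos rfl, if_neg one_ne_zero, if_true]
  rw [Measure.dirac_apply' 0 hA, one_mul]
  by_cases h0 : (0:ℝ) ∈ A
  · rw [Set.indicator_of_mem h0]
    set C : Set ℝ := {z : ℝ | (1 : ℝ) + z < T} with hC
    have hCm : MeasurableSet C := measurableSet_lt (by fun_prop) measurable_const
    have h1 : laplace (2/ε) C ≤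
        (laplace (2/ε)).map (fun z : ℝ =>
          if ((1:ℕ) : ℝ) + z < T then 0 else (round (((1:ℕ):ℝ)+z):ℝ)) A := by
      rw [Measure.map_apply (g_meas ε δ 1) hA]
      apply measure_mono
      intro z hz
      simp only [mem_preimage, Nat.cast_one]
      have hz' : 1 + z < 2 * Real.log (2 / δ) / ε + 1 := hz
      rw [if_pos hz']
      exact h0
    have h2 : laplace (2/ε) Cᶜ ≤ ENNReal.ofReal (δ / 2) := by
      have : Cᶜ = {z : ℝ | ¬((1 : ℝ) + z < T)} := by
        ext z; simp [hC]
      rw [this]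
      exact tail_le hε hδ0 hδ1
    calc (1 : ℝ≥0∞) = laplace (2/ε) C + laplace (2/ε) Cᶜ := by
          rw [measure_add_measure_compl hCm, measure_univ]
      _ ≤ _ := add_le_add h1 h2
  · rw [Set.indicator_of_notMem h0]
    exact zero_le

lemma pi_single_le {ι : Type*} [Fintype ι] [DecidableEq ι] {α : ι → Type*}
    [∀ i, MeasurableSpace (α i)] (μ ν : ∀ i, Measure (α i))
    [∀ i, IsProbabilityMeasure (μ i)] [∀ i, IsProbabilityMeasure (ν i)]
    (i₀ : ι) (c d : ℝ≥0∞)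
    (h : ∀ A : Set (α i₀), MeasurableSet A → μ i₀ A ≤ c * ν i₀ A + d)
    (heq : ∀ i, i ≠ i₀ → μ i = ν i)
    {S : Set (∀ i, α i)} (hS : MeasurableSet S) :
    Measure.pi μ S ≤ c * Measure.pi ν S + d := by
  classical
  set p : ι → Prop := fun i => i = i₀ with hp
  letI hdp : DecidablePred p := fun i => inferInstanceAs (Decidable (i = i₀))
  letI hun : Unique {i // p i} := ⟨⟨⟨i₀, rfl⟩⟩, by rintro ⟨a, ha⟩; exact Subtype.ext ha⟩
  letI hft : Fintype {i // p i} := Subtype.fintype p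
  set e := MeasurableEquiv.piEquivPiSubtypeProd α p with he
  set T : Set ((∀ i : {i // p i}, α i) × (∀ i : {i // ¬ p i}, α i)) := e.symm ⁻¹' S with hTdef
  have hT : MeasurableSet T := e.symm.measurable hS
  have key : ∀ (m : ∀ i, Measure (α i)) (_ : ∀ i, IsProbabilityMeasure (m i)),
      Measure.pi m S
        = ((Measure.pi fun i : {i // p i} => m i).prod (Measure.pi fun i : {i // ¬ p i} => m i)) T := by
    intro m hm
    have hmp := measurePreserving_piEquivPiSubtypeProd m p
    have h1 : e ⁻¹' T = S := by
      ext x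
      simp [hTdef]
    rw [← h1]
    exact (hmp.measure_preimage hT.nullMeasurableSet)
  -- one-dimensional comparison on the subtype-pi space
  have hone : ∀ B : Set (∀ i : {i // p i}, α i), MeasurableSet B →
      (Measure.pi fun i : {i // p i} => μ i) B ≤ c * (Measure.pi fun i : {i // p i} => ν i) B + d := by
    intro B hB
    have hμu := measurePreserving_piUnique (fun i : {i // p i} => μ i.1)
    have hνu := measurePreserving_piUnique (fun i : {i // p i} => ν i.1)
    have hBe : B = (MeasurableEquiv.piUnique (fun i : {i // p i} => α i.1)) ⁻¹'
        ((MeasurableEquiv.piUnique (fun i : {i // p i} => α i.1)).symm ⁻¹' B) :=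
      ((MeasurableEquiv.piUnique (fun i : {i // p i} => α i.1)).preimage_symm_preimage B).symm
    have hBm : MeasurableSet ((MeasurableEquiv.piUnique (fun i : {i // p i} => α i.1)).symm ⁻¹' B) :=
      (MeasurableEquiv.piUnique (fun i : {i // p i} => α i.1)).symm.measurable hB
    rw [hBe, hμu.measure_preimage hBm.nullMeasurableSet, hνu.measure_preimage hBm.nullMeasurableSet]
    exact h _ hBm
  have hQ : (Measure.pi fun i : {i // ¬ p i} => μ i) = (Measure.pi fun i : {i // ¬ p i} => ν i) := by
    congr 1
    funext i
    exact heq i.1 i.2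
  rw [key μ inferInstance, key ν inferInstance, hQ]
  set Q := Measure.pi fun i : {i // ¬ p i} => ν i with hQdef
  haveI : IsProbabilityMeasure Q := by infer_instance
  set P := Measure.pi fun i : {i // p i} => μ i with hPdef
  set P' := Measure.pi fun i : {i // p i} => ν i with hP'def
  rw [Measure.prod_apply_symm hT, Measure.prod_apply_symm hT]
  have hsec : ∀ y, MeasurableSet ((fun x => (x, y)) ⁻¹' T) :=
    fun y => measurable_prodMk_right hT
  calc ∫⁻ y, P ((fun x => (x, y)) ⁻¹' T) ∂Q
      ≤ ∫⁻ y, (c * P' ((fun x => (x, y)) ⁻¹' T) + d) ∂Q :=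
        lintegral_mono fun y => hone _ (hsec y)
    _ = c * ∫⁻ y, P' ((fun x => (x, y)) ⁻¹' T) ∂Q + d * Q univ := by
        rw [lintegral_add_right _ measurable_const, lintegral_const_mul c
          (measurable_measure_prodMk_right hT), lintegral_const]
    _ = c * ∫⁻ y, P' ((fun x => (x, y)) ⁻¹' T) ∂Q + d := by
        rw [measure_univ, mul_one]

lemma pi_two_le {ι : Type*} [Fintype ι] [DecidableEq ι] {α : ι → Type*}
    [∀ i, MeasurableSpace (α i)] (μ ν : ∀ i, Measure (α i))
    [∀ i, IsProbabilityMeasure (μ i)] [∀ i, IsProbabilityMeasure (ν i)]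
    (a b : ι) (hab : a ≠ b)
    (heq : ∀ i, i ≠ a → i ≠ b → μ i = ν i)
    (ca da cb db : ℝ≥0∞)
    (ha : ∀ A : Set (α a), MeasurableSet A → μ a A ≤ ca * ν a A + da)
    (hb : ∀ A : Set (α b), MeasurableSet A → μ b A ≤ cb * ν b A + db)
    {S : Set (∀ i, α i)} (hS : MeasurableSet S) :
    Measure.pi μ S ≤ ca * cb * Measure.pi ν S + ca * db + da := by
  classical
  set m : ∀ i, Measure (α i) := Function.update μ a (ν a) with hm
  haveI hmp : ∀ i, IsProbabilityMeasure (m i) := by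
    intro i
    by_cases h : i = a
    · subst h; rw [hm, Function.update_self]; infer_instance
    · rw [hm, Function.update_of_ne h]; infer_instance
  have step1 : Measure.pi μ S ≤ ca * Measure.pi m S + da := by
    apply pi_single_le μ m a ca da ?_ ?_ hS
    · intro A hA
      rw [hm, Function.update_self]
      exact ha A hA
    · intro i hi
      rw [hm, Function.update_of_ne hi]
  have step2 : Measure.pi m S ≤ cb * Measure.pi ν S + db := by
    apply pi_single_le m ν b cb db ?_ ?_ hS
    · intro A hA
      rw [hm, Function.update_of_ne (Ne.symm hab)]
      exact hb A hA
    · intro i hi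
      by_cases h : i = a
      · subst h; rw [hm, Function.update_self]
      · rw [hm, Function.update_of_ne h]
        exact heq i h hi
  calc Measure.pi μ S ≤ ca * Measure.pi m S + da := step1
    _ ≤ ca * (cb * Measure.pi ν S + db) + da :=
        add_le_add_left (mul_le_mul_right step2 ca) da
    _ = ca * cb * Measure.pi ν S + ca * db + da := by ring



lemma pointCount_split {X : Type*} [DecidableEq X] {n : ℕ} (D D' : Fin n → X) (i : Fin n)
    (hj : ∀ j, j ≠ i → D j = D' j) (x : X) :
    pointCount D x + (if D' i = x then 1 else 0)
      = pointCount D' x + (if D i = x then 1 else 0) := by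
  unfold pointCount
  rw [Finset.card_filter, Finset.card_filter,
    ← Finset.add_sum_erase _ _ (Finset.mem_univ i), ← Finset.add_sum_erase _ _ (Finset.mem_univ i)]
  have ht : ∑ j ∈ Finset.univ.erase i, (if D j = x then 1 else 0)
      = ∑ j ∈ Finset.univ.erase i, (if D' j = x then 1 else 0) := by
    apply Finset.sum_congr rfl
    intro j hjmem
    rw [hj j (Finset.mem_erase.mp hjmem).1]
  rw [ht]
  ring


/-- The stability-based histogram algorithm is `(ε, δ)`-differentially private. -/
theorem sbh_dp {X : Type*} [Fintype X] [DecidableEq X] {n : ℕ}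
    (ε δ : ℝ) (hε : 0 < ε) (hδ : δ ∈ Set.Ioo (0 : ℝ) 1)
    (D D' : Fin n → X) (hN : Neighbor D D') (S : Set (X → ℝ)) (hS : MeasurableSet S) :
    SBH ε δ D S ≤ ENNReal.ofReal (Real.exp ε) * SBH ε δ D' S + ENNReal.ofReal δ := by
  obtain ⟨hδ0, hδ1⟩ := hδ
  obtain ⟨i, hne, hj⟩ := hN
  haveI I1 : ∀ x : X, IsProbabilityMeasure (Mech ε δ (pointCount D x)) :=
    fun x => mech_prob ε δ hε _
  haveI I2 : ∀ x : X, IsProbabilityMeasure (Mech ε δ (pointCount D' x)) :=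
    fun x => mech_prob ε δ hε _
  have hSBH : SBH ε δ D = Measure.pi (fun x => Mech ε δ (pointCount D x)) := rfl
  have hSBH' : SBH ε δ D' = Measure.pi (fun x => Mech ε δ (pointCount D' x)) := rfl
  rw [hSBH, hSBH']
  have hca : pointCount D (D i) = pointCount D' (D i) + 1 := by
    have h := pointCount_split D D' i hj (D i)
    rw [if_pos rfl, if_neg (Ne.symm hne)] at h
    omega
  have hcb : pointCount D' (D' i) = pointCount D (D' i) + 1 := by
    have h := pointCount_split D D' i hj (D' i)
    rw [if_pos rfl, if_neg hne] at h
    omega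
  have hother : ∀ x, x ≠ D i → x ≠ D' i → pointCount D x = pointCount D' x := by
    intro x hxa hxb
    have h := pointCount_split D D' i hj x
    rw [if_neg (fun hc => hxb hc.symm), if_neg (fun hc => hxa hc.symm)] at h
    omega
  have heq' : ∀ x, x ≠ D i → x ≠ D' i →
      Mech ε δ (pointCount D x) = Mech ε δ (pointCount D' x) :=
    fun x hxa hxb => congrArg (Mech ε δ) (hother x hxa hxb)
  have hbnd_a : Bnd (Mech ε δ (pointCount D (D i))) (Mech ε δ (pointCount D' (D i)))
        1 (ENNReal.ofReal (δ / 2))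
      ∨ Bnd (Mech ε δ (pointCount D (D i))) (Mech ε δ (pointCount D' (D i)))
        (ENNReal.ofReal (Real.exp (ε / 2))) 0 := by
    by_cases h0 : pointCount D' (D i) = 0
    · left; rw [hca, h0, zero_add]; exact mech_one_zero hε hδ0 hδ1
    · right; rw [hca]; exact mech_shift hε (Nat.succ_ne_zero _) h0 (Or.inl rfl)
  have hbnd_b : Bnd (Mech ε δ (pointCount D (D' i))) (Mech ε δ (pointCount D' (D' i)))
        1 (ENNReal.ofReal (δ / 2))
      ∨ Bnd (Mech ε δ (pointCount D (D' i))) (Mech ε δ (pointCount D' (D' i)))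
        (ENNReal.ofReal (Real.exp (ε / 2))) 0 := by
    by_cases h0 : pointCount D (D' i) = 0
    · left; rw [hcb, h0, zero_add]; exact mech_zero_one hε hδ0 hδ1
    · right; rw [hcb]; exact mech_shift hε h0 (Nat.succ_ne_zero _) (Or.inr rfl)
  have hee : ENNReal.ofReal (Real.exp (ε / 2)) * ENNReal.ofReal (Real.exp (ε / 2))
      = ENNReal.ofReal (Real.exp ε) := by
    rw [← ENNReal.ofReal_mul (Real.exp_nonneg _), ← Real.exp_add]
    norm_num
  have h1e : (1 : ℝ≥0∞) ≤ ENNReal.ofReal (Real.exp ε) :=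
    ENNReal.one_le_ofReal.mpr (Real.one_le_exp hε.le)
  have hhe : ENNReal.ofReal (Real.exp (ε / 2)) ≤ ENNReal.ofReal (Real.exp ε) :=
    ENNReal.ofReal_le_ofReal (Real.exp_le_exp.mpr (by linarith))
  have hdd : ENNReal.ofReal (δ / 2) + ENNReal.ofReal (δ / 2) = ENNReal.ofReal δ := by
    rw [← ENNReal.ofReal_add (by linarith) (by linarith)]
    norm_num
  have hd2 : ENNReal.ofReal (δ / 2) ≤ ENNReal.ofReal δ :=
    ENNReal.ofReal_le_ofReal (by linarith)
  set ν : X → Measure ℝ := fun x => Mech ε δ (pointCount D' x) with hν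
  set μ : X → Measure ℝ := fun x => Mech ε δ (pointCount D x) with hμ
  rcases hbnd_a with hA | hA <;> rcases hbnd_b with hB | hB
  · -- both additive
    have h := pi_two_le μ ν (D i) (D' i) hne heq' 1 (ENNReal.ofReal (δ / 2))
      1 (ENNReal.ofReal (δ / 2)) hA hB hS
    refine le_trans h ?_
    simp only [one_mul]
    rw [add_assoc, hdd]
    exact add_le_add_left (le_mul_of_one_le_left zero_le h1e) _
  · -- a additive, b multiplicative : replace a first
    have h := pi_two_le μ ν (D i) (D' i) hne heq' 1 (ENNReal.ofReal (δ / 2))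
      (ENNReal.ofReal (Real.exp (ε / 2))) 0 hA hB hS
    refine le_trans h ?_
    simp only [one_mul, mul_zero, add_zero]
    exact add_le_add (mul_le_mul_left hhe _) hd2
  · -- a multiplicative, b additive : replace b first
    have h := pi_two_le μ ν (D' i) (D i) (Ne.symm hne)
      (fun x hxb hxa => heq' x hxa hxb) 1 (ENNReal.ofReal (δ / 2))
      (ENNReal.ofReal (Real.exp (ε / 2))) 0 hB hA hS
    refine le_trans h ?_
    simp only [one_mul, mul_zero, add_zero]
    exact add_le_add (mul_le_mul_left hhe _) hd2
  · -- both multiplicative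
    have h := pi_two_le μ ν (D i) (D' i) hne heq' (ENNReal.ofReal (Real.exp (ε / 2))) 0
      (ENNReal.ofReal (Real.exp (ε / 2))) 0 hA hB hS
    refine le_trans h ?_
    simp only [mul_zero, add_zero]
    rw [hee]
    exact le_self_add
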